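/- Fix a₀ ∈ ℝ and define ψ(t) = √((2+a₀²)t² + 2a₀t + 1), V(t,x) = (ψ'(t)/ψ(t))·x, and p(t,x) = 1/(ψ(t)(ψ(t)² + x²)). Then the pressure transport equation with γ = 3, namely ∂_t p + V ∂_x p + 3p ∂_x V = 0, holds at every (t,x) ∈ ℝ × ℝ. -/

import Mathlib

/-- The time factor of the paper's explicit globally smooth 1D solution (γ = 3):
`ψ(t) = √((2+a₀²)t² + 2a₀t + 1)`. -/
noncomputable def psi (a₀ t : ℝ) : ℝ :=
  Real.sqrt ((2 + a₀ ^ 2) * t ^ 2 + 2 * a₀ * t + 1)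

lemma Qpos (a₀ t : ℝ) : 0 < (2 + a₀ ^ 2) * t ^ 2 + 2 * a₀ * t + 1 := by
  rcases eq_or_ne t 0 with h | h
  · simp [h]
  · nlinarith [sq_nonneg (a₀ * t + 1), pow_pos (abs_pos.2 h) 2, sq_abs t]

lemma psi_pos (a₀ t : ℝ) : 0 < psi a₀ t := Real.sqrt_pos.2 (Qpos a₀ t)

lemma psi_sq (a₀ t : ℝ) : (psi a₀ t) ^ 2 = (2 + a₀ ^ 2) * t ^ 2 + 2 * a₀ * t + 1 :=
  Real.sq_sqrt (Qpos a₀ t).le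

lemma psi_hasDerivAt (a₀ t : ℝ) :
    HasDerivAt (psi a₀) ((2 * (2 + a₀ ^ 2) * t + 2 * a₀) / (2 * psi a₀ t)) t := by
  have hQ : HasDerivAt (fun s : ℝ => (2 + a₀ ^ 2) * s ^ 2 + 2 * a₀ * s + 1)
      (2 * (2 + a₀ ^ 2) * t + 2 * a₀) t := by
    have := ((hasDerivAt_pow 2 t).const_mul (2 + a₀ ^ 2)).add
      ((hasDerivAt_id t).const_mul (2 * a₀)) |>.add_const 1
    refine this.congr_deriv ?_
    norm_num
    ring
  exact hQ.sqrt (Qpos a₀ t).ne'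

/-- pressure equation for the explicit solution (16).
With `V = (ψ'/ψ)x` and `p = 1/(ψ(ψ²+x²))`, one has
`∂ₜp + V ∂ₓp + 3p ∂ₓV = 0` at every `(t,x)`. -/
theorem stmt11 (a₀ : ℝ) :
    ∀ t x : ℝ,
      deriv (fun s => 1 / (psi a₀ s * ((psi a₀ s) ^ 2 + x ^ 2))) t
        + ((deriv (psi a₀) t / psi a₀ t) * x)
            * deriv (fun y => 1 / (psi a₀ t * ((psi a₀ t) ^ 2 + y ^ 2))) x
        + 3 * (1 / (psi a₀ t * ((psi a₀ t) ^ 2 + x ^ 2)))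
            * deriv (fun y => (deriv (psi a₀) t / psi a₀ t) * y) x = 0 := by
  intro t x
  set A := psi a₀ t with hA
  have hApos : 0 < A := psi_pos a₀ t
  set B := (2 * (2 + a₀ ^ 2) * t + 2 * a₀) / (2 * A) with hB
  have hψ : HasDerivAt (psi a₀) B t := psi_hasDerivAt a₀ t
  have hdψ : deriv (psi a₀) t = B := hψ.deriv
  -- time derivative of p
  have hDen : HasDerivAt (fun s => psi a₀ s * ((psi a₀ s) ^ 2 + x ^ 2))
      (B * (A ^ 2 + x ^ 2) + A * (2 * A * B)) t := by
    have h2 : HasDerivAt (fun s => (psi a₀ s) ^ 2 + x ^ 2) (2 * A * B) t := by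
      have := (hψ.pow 2).add_const (x ^ 2)
      refine this.congr_deriv ?_
      norm_num [hA]
    exact hψ.mul h2
  have hDenne : A * (A ^ 2 + x ^ 2) ≠ 0 := by positivity
  have hpt : deriv (fun s => 1 / (psi a₀ s * ((psi a₀ s) ^ 2 + x ^ 2))) t
      = (0 * (A * (A ^ 2 + x ^ 2)) - 1 * (B * (A ^ 2 + x ^ 2) + A * (2 * A * B)))
        / (A * (A ^ 2 + x ^ 2)) ^ 2 :=
    ((hasDerivAt_const t (1 : ℝ)).div hDen hDenne).deriv
  -- space derivative of p
  have hDenx : HasDerivAt (fun y => A * (A ^ 2 + y ^ 2)) (A * (2 * x)) x := by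
    have := ((hasDerivAt_pow 2 x).const_add (A ^ 2)).const_mul A
    refine this.congr_deriv ?_
    norm_num
  have hpx : deriv (fun y => 1 / (A * (A ^ 2 + y ^ 2))) x
      = (0 * (A * (A ^ 2 + x ^ 2)) - 1 * (A * (2 * x))) / (A * (A ^ 2 + x ^ 2)) ^ 2 :=
    ((hasDerivAt_const x (1 : ℝ)).div hDenx hDenne).deriv
  -- space derivative of V
  have hVx : deriv (fun y => B / A * y) x = B / A := by
    simpa using ((hasDerivAt_id x).const_mul (B / A)).deriv
  rw [hdψ, hpt, hpx, hVx]
  field_simp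
  ring
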